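/- For positive integers n, r and a non-negative integer j, the number of partitions of n in which exactly j different part-values are divisible by r equals the number of partitions of n in which exactly j different part-values occur at least r times (Franklin's theorem). -/

import Mathlib

open Nat Finset PowerSeries

open scoped Classical

noncomputable section FranklinAux

variable {α : Type*}

/-- weighted generating series for a single part-value `i`:
coefficient of `q^(k*i)` is `w k`. -/
def wSeries (α : Type*) [CommSemiring α] (i : ℕ) (w : ℕ → α) : PowerSeries α :=
  PowerSeries.mk fun m => if i ∣ m then w (m / i) else 0

/-- the finsupp associated to a partition: value `i` maps to `count i * i`. -/
def partFinsupp {n : ℕ} (p : n.Partition) : ℕ →₀ ℕ where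
  support := p.parts.toFinset
  toFun := fun i => p.parts.count i * i
  mem_support_toFun := fun a => by
    simp only [Multiset.mem_toFinset, ne_eq, mul_eq_zero, not_or]
    constructor
    · intro ha
      exact ⟨by simpa [Multiset.count_eq_zero] using ha, (p.parts_pos ha).ne'⟩
    · intro ha
      exact Multiset.count_ne_zero.mp ha.1

theorem weightedGF_prop (α : Type*) [CommSemiring α] (n : ℕ) (s : Finset ℕ)
    (hs : ∀ i ∈ s, 0 < i) (w : ℕ → ℕ → α) :
    ∑ p ∈ Finset.univ.filter (fun p : n.Partition => ∀ j ∈ p.parts, j ∈ s),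
        ∏ i ∈ s, w i (p.parts.count i) =
      PowerSeries.coeff n (∏ i ∈ s, wSeries α i (w i)) := by
  rw [PowerSeries.coeff_prod]
  simp_rw [wSeries, coeff_mk]
  apply Finset.sum_bij_ne_zero (fun p _ _ => partFinsupp p)
  · -- membership
    intro p hp hp0
    simp only [Finset.mem_filter, Finset.mem_univ, true_and] at hp
    rw [Finset.mem_finsuppAntidiag]
    constructor
    · conv_rhs => rw [← p.parts_sum]
      rw [Finset.sum_multiset_count_of_subset _ s]
      · simp [partFinsupp]
      · intro i hi
        exact hp i (Multiset.mem_toFinset.mp hi)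
    · intro i hi
      simp only [partFinsupp, Finsupp.mem_support_iff, ne_eq, mul_eq_zero, not_or] at hi
      exact hp i (Multiset.mem_toFinset.mp hi)
  · -- injective
    intro p₁ h₁ h₁0 p₂ h₂ h₂0 h
    apply Nat.Partition.ext
    ext i
    simp only [partFinsupp, Finsupp.mk.injEq] at h
    by_cases hi : i = 0
    · subst hi
      rw [Multiset.count_eq_zero_of_notMem (fun ha => (p₁.parts_pos ha).false),
        Multiset.count_eq_zero_of_notMem (fun ha => (p₂.parts_pos ha).false)]
    · have := congrFun h.2 i
      simpa [Nat.mul_left_inj hi] using this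
  · -- surjective
    intro l hl hl0
    have hdvd : ∀ i ∈ s, i ∣ l i := by
      intro i hi
      by_contra hc
      exact hl0 (Finset.prod_eq_zero hi (by rw [if_neg hc]))
    rw [Finset.mem_finsuppAntidiag] at hl
    have hcount : ∀ i ∈ s,
        Multiset.count i (∑ i' ∈ s, Multiset.replicate (l i' / i') i') = l i / i := by
      intro i hi
      simp [Multiset.count_sum', Multiset.count_replicate, hi]
    refine ⟨⟨∑ i ∈ s, Multiset.replicate (l i / i) i, ?_, ?_⟩, ?_, ?_, ?_⟩
    · intro i hi
      simp only [Multiset.mem_sum] at hi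
      obtain ⟨t, ht, hz⟩ := hi
      rw [Multiset.eq_of_mem_replicate hz]
      exact hs t ht
    · simp_rw [Multiset.sum_sum, Multiset.sum_replicate, Nat.nsmul_eq_mul]
      rw [← hl.1]
      exact Finset.sum_congr rfl fun i hi => Nat.div_mul_cancel (hdvd i hi)
    · simp only [Finset.mem_filter, Finset.mem_univ, true_and]
      intro i hi
      simp only [Multiset.mem_sum] at hi
      obtain ⟨t, ht, hz⟩ := hi
      rwa [Multiset.eq_of_mem_replicate hz]
    · -- nonzero
      have he : ∏ i ∈ s, w i (Multiset.count i (∑ i' ∈ s, Multiset.replicate (l i' / i') i')) =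
          ∏ x ∈ s, if x ∣ l x then w x (l x / x) else 0 :=
        Finset.prod_congr rfl fun i hi => by rw [hcount i hi, if_pos (hdvd i hi)]
      dsimp only
      rw [he]
      exact hl0
    · -- equality
      ext i
      by_cases hi : i ∈ s
      · simp only [partFinsupp, Finsupp.coe_mk]
        rw [hcount i hi, Nat.div_mul_cancel (hdvd i hi)]
      · have h1 : Multiset.count i (∑ i' ∈ s, Multiset.replicate (l i' / i') i') = 0 := by
          simp [Multiset.count_sum', Multiset.count_replicate, hi]
        simp only [partFinsupp, Finsupp.coe_mk]
        rw [h1, zero_mul]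
        exact (Finsupp.notMem_support_iff.mp (fun hmem => hi (hl.2 hmem))).symm
  · -- values
    intro p hp hp0
    apply Finset.prod_congr rfl
    intro i hi
    rw [if_pos (by simp [partFinsupp, Dvd.intro_left])]
    simp only [partFinsupp, Finsupp.coe_mk]
    rw [Nat.mul_div_cancel _ (hs i hi)]

theorem one_sub_mul_wSeries [CommRing α] {i : ℕ} (hi : 0 < i) (w : ℕ → α) :
    (1 - (X : PowerSeries α) ^ i) * wSeries α i w =
      PowerSeries.mk (fun m => if m = 0 then w 0 else
        if i ∣ m then w (m / i) - w (m / i - 1) else 0) := by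
  ext m
  rw [sub_mul, one_mul, map_sub, PowerSeries.coeff_X_pow_mul']
  simp only [wSeries, coeff_mk]
  rcases Nat.eq_zero_or_pos m with rfl | hm
  · rw [if_pos (dvd_zero i), if_neg (by omega), if_pos rfl, sub_zero, Nat.zero_div]
  · rw [if_neg hm.ne']
    by_cases hd : i ∣ m
    · obtain ⟨k, rfl⟩ := hd
      have hk : 0 < k := Nat.pos_of_ne_zero fun h => by subst h; simp at hm
      rw [if_pos (dvd_mul_right i k), if_pos (Nat.le_of_dvd hm (dvd_mul_right i k))]
      have h1 : i * k - i = i * (k - 1) := by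
        cases k with
        | zero => omega
        | succ k' => simp [Nat.mul_succ]
      rw [h1, if_pos (dvd_mul_right i (k - 1)), Nat.mul_div_cancel_left _ hi,
        Nat.mul_div_cancel_left _ hi, if_pos (dvd_mul_right i k)]
    · rw [if_neg hd]
      split_ifs with h2 h3
      · exfalso
        apply hd
        have := Nat.dvd_add h3 (dvd_refl i)
        rwa [Nat.sub_add_cancel h2] at this
      · rw [sub_zero]
      · rw [sub_zero]

/-- weight for the "divisible part-values" side. -/
def wF [CommSemiring α] (r : ℕ) (c : α) : ℕ → ℕ → α := fun i k => if 0 < k ∧ r ∣ i then c else 1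

/-- weight for the "repeated part-values" side. -/
def wG [CommSemiring α] (r : ℕ) (c : α) : ℕ → α := fun k => if r ≤ k then c else 1

theorem FL1 [CommRing α] (c : α) {i r : ℕ} (hi : 0 < i) (hri : ¬r ∣ i) :
    (1 - (X : PowerSeries α) ^ i) * wSeries α i (wF r c i) = 1 := by
  rw [one_sub_mul_wSeries hi]
  ext m
  rw [coeff_mk, coeff_one]
  simp only [wF, hri, and_false, if_false]
  split_ifs <;> simp

theorem FL2 [CommRing α] (c : α) {i r : ℕ} (hi : 0 < i) (hri : r ∣ i) :
    (1 - (X : PowerSeries α) ^ i) * wSeries α i (wF r c i) =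
      1 + PowerSeries.C (c - 1) * X ^ i := by
  rw [one_sub_mul_wSeries hi]
  ext m
  rw [map_add, coeff_one, PowerSeries.coeff_C_mul, coeff_X_pow, coeff_mk]
  simp only [wF, hri, and_true]
  rcases Nat.eq_zero_or_pos m with rfl | hm
  · rw [if_pos rfl, if_neg (by omega : ¬(0 = i))]
    simp
  · rw [if_neg hm.ne', if_neg hm.ne']
    by_cases hd : i ∣ m
    · obtain ⟨k, rfl⟩ := hd
      have hk : 0 < k := Nat.pos_of_ne_zero fun h => by subst h; simp at hm
      rw [if_pos (dvd_mul_right i k), Nat.mul_div_cancel_left _ hi]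
      by_cases h1 : k = 1
      · subst h1
        rw [if_pos (mul_one i), if_pos hk]
        norm_num
      · rw [if_neg (fun h : i * k = i =>
            h1 (Nat.eq_of_mul_eq_mul_left hi (by rw [h, mul_one])))]
        rw [if_pos hk, if_pos (by omega : 0 < k - 1), mul_zero, add_zero, sub_self]
    · rw [if_neg hd, if_neg (fun h : m = i => hd (h ▸ dvd_refl i)), mul_zero, add_zero]

theorem lemG [CommRing α] (c : α) {i r : ℕ} (hi : 0 < i) (hr : 0 < r) :
    (1 - (X : PowerSeries α) ^ i) * wSeries α i (wG r c) =
      1 + PowerSeries.C (c - 1) * X ^ (r * i) := by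
  rw [one_sub_mul_wSeries hi]
  ext m
  rw [map_add, coeff_one, PowerSeries.coeff_C_mul, coeff_X_pow, coeff_mk]
  simp only [wG]
  rcases Nat.eq_zero_or_pos m with rfl | hm
  · have h0 : ¬(0 = r * i) := by
      have := Nat.mul_pos hr hi
      omega
    simp [h0, hr.ne']
  · rw [if_neg hm.ne', if_neg hm.ne']
    by_cases hd : i ∣ m
    · obtain ⟨k, rfl⟩ := hd
      have hk : 0 < k := Nat.pos_of_ne_zero fun h => by subst h; simp at hm
      rw [if_pos (dvd_mul_right i k), Nat.mul_div_cancel_left _ hi]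
      by_cases h1 : k = r
      · subst h1
        rw [if_pos (mul_comm i k), if_pos le_rfl, if_neg (by omega : ¬k ≤ k - 1), mul_one,
          zero_add]
      · rw [if_neg (fun h : i * k = r * i =>
            h1 (Nat.eq_of_mul_eq_mul_left hi (by rw [h, mul_comm])))]
        rw [mul_zero, add_zero]
        by_cases h2 : r ≤ k
        · rw [if_pos h2, if_pos (by omega : r ≤ k - 1), sub_self]
        · rw [if_neg h2, if_neg (by omega : ¬r ≤ k - 1), sub_self]
    · rw [if_neg hd, if_neg (fun h : m = r * i => hd (h ▸ dvd_mul_left i r)), mul_zero, add_zero]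

theorem prod_sub_one_dvd [CommRing α] (d : PowerSeries α) (t : Finset ℕ)
    (f : ℕ → PowerSeries α) (h : ∀ i ∈ t, d ∣ f i - 1) :
    d ∣ (∏ i ∈ t, f i) - 1 := by
  classical
  induction t using Finset.induction_on with
  | empty => simp
  | @insert a t ha ih =>
    rw [Finset.prod_insert ha]
    have key : f a * ∏ i ∈ t, f i - 1 = f a * ((∏ i ∈ t, f i) - 1) + (f a - 1) := by ring
    rw [key]
    exact dvd_add ((ih fun i hi => h i (Finset.mem_insert_of_mem hi)).mul_left _)
      (h a (Finset.mem_insert_self a t))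

theorem key_coeff (α : Type*) [CommRing α] (c : α) (n r : ℕ) (hr : 0 < r) :
    PowerSeries.coeff n (∏ i ∈ Finset.Icc 1 n, wSeries α i (wF r c i)) =
      PowerSeries.coeff n (∏ i ∈ Finset.Icc 1 n, wSeries α i (wG r c)) := by
  set P : PowerSeries α := ∏ i ∈ Finset.Icc 1 n, (1 - X ^ i) with hPdef
  set Q : PowerSeries α := ∏ m ∈ Finset.Icc 1 (n / r), (1 + PowerSeries.C (c - 1) * X ^ (r * m))
    with hQdef
  have hpos : ∀ i ∈ Finset.Icc 1 n, 0 < i := fun i hi => (Finset.mem_Icc.mp hi).1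
  have hP : IsUnit P := by
    rw [PowerSeries.isUnit_iff_constantCoeff, hPdef, map_prod]
    have h1 : ∀ i ∈ Finset.Icc 1 n, constantCoeff (1 - (X : PowerSeries α) ^ i) = 1 := by
      intro i hi
      rw [map_sub, map_one, map_pow, PowerSeries.constantCoeff_X,
        zero_pow (hpos i hi).ne', sub_zero]
    rw [Finset.prod_congr rfl h1, Finset.prod_const_one]
    exact isUnit_one
  have hF : P * (∏ i ∈ Finset.Icc 1 n, wSeries α i (wF r c i)) = Q := by
    rw [hPdef, ← Finset.prod_mul_distrib,
      ← Finset.prod_filter_mul_prod_filter_not (Finset.Icc 1 n) (fun i => r ∣ i)]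
    have h2 : ∏ i ∈ (Finset.Icc 1 n).filter (fun i => ¬r ∣ i),
        ((1 - (X : PowerSeries α) ^ i) * wSeries α i (wF r c i)) = 1 :=
      Finset.prod_eq_one fun i hi =>
        FL1 c (hpos i (Finset.mem_filter.mp hi).1) (Finset.mem_filter.mp hi).2
    rw [h2, mul_one,
      Finset.prod_congr rfl (fun i hi =>
        FL2 c (hpos i (Finset.mem_filter.mp hi).1) (Finset.mem_filter.mp hi).2), hQdef]
    apply Finset.prod_nbij' (fun i => i / r) (fun m => r * m)
    · intro a ha
      simp only [Finset.mem_filter, Finset.mem_Icc] at ha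
      rw [Finset.mem_Icc]
      exact ⟨(Nat.one_le_div_iff hr).mpr (Nat.le_of_dvd (by omega) ha.2),
        Nat.div_le_div_right ha.1.2⟩
    · intro m hm
      rw [Finset.mem_Icc] at hm
      simp only [Finset.mem_filter, Finset.mem_Icc]
      exact ⟨⟨Nat.mul_pos hr hm.1, (Nat.le_div_iff_mul_le hr).mp hm.2 |>.trans_eq' (mul_comm m r)⟩,
        dvd_mul_right r m⟩
    · intro a ha
      exact Nat.mul_div_cancel' (Finset.mem_filter.mp ha).2
    · intro m hm
      exact Nat.mul_div_cancel_left m hr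
    · intro a ha
      rw [Nat.mul_div_cancel' (Finset.mem_filter.mp ha).2]
  have hG : P * (∏ i ∈ Finset.Icc 1 n, wSeries α i (wG r c)) =
      Q * ∏ i ∈ Finset.Icc 1 n \ Finset.Icc 1 (n / r),
        (1 + PowerSeries.C (c - 1) * X ^ (r * i)) := by
    rw [hPdef, ← Finset.prod_mul_distrib,
      Finset.prod_congr rfl (fun i hi => lemG c (hpos i hi) hr), hQdef]
    rw [← Finset.prod_sdiff (Finset.Icc_subset_Icc_right (Nat.div_le_self n r)), mul_comm]
  have hE : (X : PowerSeries α) ^ (n + 1) ∣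
      (∏ i ∈ Finset.Icc 1 n \ Finset.Icc 1 (n / r),
        (1 + PowerSeries.C (c - 1) * X ^ (r * i))) - 1 := by
    apply prod_sub_one_dvd
    intro i hi
    simp only [Finset.mem_sdiff, Finset.mem_Icc] at hi
    have hni : n / r < i := by omega
    have hri : n + 1 ≤ r * i := by
      have h6 := (Nat.div_lt_iff_lt_mul hr).mp hni
      rw [Nat.mul_comm i r] at h6
      omega
    rw [add_sub_cancel_left]
    exact (pow_dvd_pow X hri).mul_left _
  have hdvd : (X : PowerSeries α) ^ (n + 1) ∣
      (∏ i ∈ Finset.Icc 1 n, wSeries α i (wG r c)) -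
        (∏ i ∈ Finset.Icc 1 n, wSeries α i (wF r c i)) := by
    have h3 : P * ((∏ i ∈ Finset.Icc 1 n, wSeries α i (wG r c)) -
        (∏ i ∈ Finset.Icc 1 n, wSeries α i (wF r c i))) =
        Q * ((∏ i ∈ Finset.Icc 1 n \ Finset.Icc 1 (n / r),
          (1 + PowerSeries.C (c - 1) * X ^ (r * i))) - 1) := by
      rw [mul_sub, hF, hG]
      ring
    have h4 : (X : PowerSeries α) ^ (n + 1) ∣ P * _ := h3 ▸ hE.mul_left Q
    exact hP.dvd_mul_left.mp h4
  have h5 := PowerSeries.X_pow_dvd_iff.mp hdvd n (Nat.lt_succ_self n)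
  rw [map_sub, sub_eq_zero] at h5
  exact h5.symm

end FranklinAux

/-- Franklin: the number of partitions of n with exactly j different
part-values divisible by r equals the number of partitions of n with exactly
j different part-values occurring at least r times. -/
theorem franklin (n r j : ℕ) (hn : 0 < n) (hr : 0 < r) :
    Nat.card {p : n.Partition //
        (p.parts.toFinset.filter (fun x => r ∣ x)).card = j} =
      Nat.card {p : n.Partition //
        (p.parts.toFinset.filter (fun x => r ≤ p.parts.count x)).card = j} := by
  classical
  have hparts : ∀ p : n.Partition, ∀ i ∈ p.parts, i ∈ Finset.Icc 1 n := by
    intro p i hi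
    rw [Finset.mem_Icc]
    exact ⟨p.parts_pos hi, by
      simpa [p.parts_sum] using Multiset.single_le_sum (fun _ _ => Nat.zero_le _) _ hi⟩
  have hfilter : (Finset.univ.filter
      (fun p : n.Partition => ∀ i ∈ p.parts, i ∈ Finset.Icc 1 n)) = Finset.univ :=
    Finset.filter_true_of_mem fun p _ => hparts p
  have hs : ∀ i ∈ Finset.Icc 1 n, 0 < i := fun i hi => (Finset.mem_Icc.mp hi).1
  have hA := weightedGF_prop (Polynomial ℤ) n (Finset.Icc 1 n) hs
    (wF r Polynomial.X)
  have hB := weightedGF_prop (Polynomial ℤ) n (Finset.Icc 1 n) hs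
    (fun _ => wG r Polynomial.X)
  rw [hfilter] at hA hB
  have hkey := key_coeff (Polynomial ℤ) Polynomial.X n r hr
  have hsum : (∑ p : n.Partition,
        Polynomial.X ^ ((p.parts.toFinset.filter (fun x => r ∣ x)).card) : Polynomial ℤ) =
      ∑ p : n.Partition,
        Polynomial.X ^ ((p.parts.toFinset.filter (fun x => r ≤ p.parts.count x)).card) := by
    have hprodA : ∀ p : n.Partition,
        (∏ i ∈ Finset.Icc 1 n, wF r (Polynomial.X : Polynomial ℤ) i (p.parts.count i)) =
          Polynomial.X ^ ((p.parts.toFinset.filter (fun x => r ∣ x)).card) := by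
      intro p
      simp only [wF]
      rw [Finset.prod_ite, Finset.prod_const, Finset.prod_const_one, mul_one]
      congr 1
      apply congrArg
      ext i
      simp only [Finset.mem_filter, Finset.mem_Icc, Multiset.mem_toFinset]
      constructor
      · rintro ⟨_, hcpos, hdvd⟩
        exact ⟨Multiset.count_pos.mp hcpos, hdvd⟩
      · rintro ⟨hmem, hdvd⟩
        exact ⟨Finset.mem_Icc.mp (hparts p i hmem), Multiset.count_pos.mpr hmem, hdvd⟩
    have hprodB : ∀ p : n.Partition,
        (∏ i ∈ Finset.Icc 1 n, wG r (Polynomial.X : Polynomial ℤ) (p.parts.count i)) =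
          Polynomial.X ^ ((p.parts.toFinset.filter (fun x => r ≤ p.parts.count x)).card) := by
      intro p
      simp only [wG]
      rw [Finset.prod_ite, Finset.prod_const, Finset.prod_const_one, mul_one]
      congr 1
      apply congrArg
      ext i
      simp only [Finset.mem_filter, Finset.mem_Icc, Multiset.mem_toFinset]
      constructor
      · rintro ⟨_, hle⟩
        exact ⟨Multiset.count_pos.mp (lt_of_lt_of_le hr hle), hle⟩
      · rintro ⟨hmem, hle⟩
        exact ⟨Finset.mem_Icc.mp (hparts p i hmem), hle⟩
    calc (∑ p : n.Partition,
          Polynomial.X ^ ((p.parts.toFinset.filter (fun x => r ∣ x)).card) : Polynomial ℤ)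
        = ∑ p : n.Partition,
            ∏ i ∈ Finset.Icc 1 n, wF r (Polynomial.X : Polynomial ℤ) i (p.parts.count i) :=
          Finset.sum_congr rfl fun p _ => (hprodA p).symm
      _ = ∑ p : n.Partition,
            ∏ i ∈ Finset.Icc 1 n, wG r (Polynomial.X : Polynomial ℤ) (p.parts.count i) := by
          rw [hA, hB, hkey]
      _ = ∑ p : n.Partition,
            Polynomial.X ^ ((p.parts.toFinset.filter (fun x => r ≤ p.parts.count x)).card) :=
          Finset.sum_congr rfl fun p _ => hprodB p
  have hco := congrArg (fun q : Polynomial ℤ => q.coeff j) hsum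
  simp only [Polynomial.finset_sum_coeff, Polynomial.coeff_X_pow] at hco
  rw [Finset.sum_boole, Finset.sum_boole] at hco
  have hcard := Int.natCast_inj.mp hco
  rw [Nat.card_eq_fintype_card, Nat.card_eq_fintype_card, Fintype.card_subtype,
    Fintype.card_subtype]
  convert hcard using 2 <;>
    · apply Finset.filter_congr
      intro p _
      exact ⟨fun h => h.symm, fun h => h.symm⟩
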